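/- Completeness of RmbC with respect to neighborhood models: for every set of formulas Γ ∪ {φ} over Σ, if Γ ⊨_NM φ then Γ ⊢_RmbC φ. -/

import Mathlib

namespace LFI

/-- Formulas over the propositional signature Σ = {∧,∨,→,¬,∘}:
`neg` is the paraconsistent negation ¬ and `circ` the consistency operator ∘. -/
inductive Formula : Type
  | var : ℕ → Formula
  | and : Formula → Formula → Formula
  | or : Formula → Formula → Formula
  | imp : Formula → Formula → Formula
  | neg : Formula → Formula
  | circ : Formula → Formula

namespace Formula

/-- `α ↔ β` abbreviates `(α→β) ∧ (β→α)`. -/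
def iffF (a b : Formula) : Formula := and (imp a b) (imp b a)

/-- Conjunction `γ ∧ γ₁ ∧ … ∧ γₙ` of the nonempty list `γ :: l` (right-associated). -/
def conjL (γ : Formula) : List Formula → Formula
  | [] => γ
  | ψ :: l => and γ (conjL ψ l)

/-- `subst p α γ` is `γ[p/α]`: the result of replacing every occurrence of
the propositional variable `p` in `γ` by `α`. -/
def subst (p : ℕ) (α : Formula) : Formula → Formula
  | var q => if q = p then α else var q
  | and a b => and (subst p α a) (subst p α b)
  | or a b => or (subst p α a) (subst p α b)
  | imp a b => imp (subst p α a) (subst p α b)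
  | neg a => neg (subst p α a)
  | circ a => circ (subst p α a)

end Formula

open Formula

/-- Theoremhood for the Hilbert calculus `RmbC` (axioms Ax1–Ax10 of CPL⁺ plus (bc1),
modus ponens and the replacement rules (R¬), (R∘)) extended with an arbitrary set `Ax`
of extra axiom(-schema instance)s.  `Prf ∅` is theoremhood in RmbC itself. -/
inductive Prf (Ax : Set Formula) : Formula → Prop
  | ax1 (a b : Formula) : Prf Ax (imp a (imp b a))
  | ax2 (a b c : Formula) :
      Prf Ax (imp (imp a (imp b c)) (imp (imp a b) (imp a c)))
  | ax3 (a b : Formula) : Prf Ax (imp a (imp b (and a b)))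
  | ax4 (a b : Formula) : Prf Ax (imp (and a b) a)
  | ax5 (a b : Formula) : Prf Ax (imp (and a b) b)
  | ax6 (a b : Formula) : Prf Ax (imp a (or a b))
  | ax7 (a b : Formula) : Prf Ax (imp b (or a b))
  | ax8 (a b c : Formula) :
      Prf Ax (imp (imp a c) (imp (imp b c) (imp (or a b) c)))
  | ax9 (a b : Formula) : Prf Ax (or (imp a b) a)
  | ax10 (a : Formula) : Prf Ax (or a (neg a))
  | bc1 (a b : Formula) : Prf Ax (imp (circ a) (imp a (imp (neg a) b)))
  | ext {a : Formula} : a ∈ Ax → Prf Ax a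
  | mp {a b : Formula} : Prf Ax (imp a b) → Prf Ax a → Prf Ax b
  | rneg {a b : Formula} : Prf Ax (iffF a b) → Prf Ax (iffF (neg a) (neg b))
  | rcirc {a b : Formula} : Prf Ax (iffF a b) → Prf Ax (iffF (circ a) (circ b))

/-- Local derivation from premises: `Γ ⊢ φ` iff `φ` is a theorem, or there is a
finite nonempty subset `{γ, γ₁, …, γₙ} ⊆ Γ` with `⊢ (γ ∧ γ₁ ∧ … ∧ γₙ) → φ`. -/
def Deriv (Ax Γ : Set Formula) (φ : Formula) : Prop :=
  Prf Ax φ ∨ ∃ (γ : Formula) (l : List Formula),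
    γ ∈ Γ ∧ (∀ ψ ∈ l, ψ ∈ Γ) ∧ Prf Ax (imp (conjL γ l) φ)

/-- The denotation function of the neighborhood model `⟨⟨W, Sn, Sc⟩, d⟩` for RmbC. -/
def nden {W : Type} (Sn Sc : Set W → Set W) (d : ℕ → Set W) : Formula → Set W
  | .var n => d n
  | .and a b => nden Sn Sc d a ∩ nden Sn Sc d b
  | .or a b => nden Sn Sc d a ∪ nden Sn Sc d b
  | .imp a b => (nden Sn Sc d a)ᶜ ∪ nden Sn Sc d b
  | .neg a => (nden Sn Sc d a)ᶜ ∪ Sn (nden Sn Sc d a)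
  | .circ a =>
      (nden Sn Sc d a ∩ ((nden Sn Sc d a)ᶜ ∪ Sn (nden Sn Sc d a)))ᶜ ∩ Sc (nden Sn Sc d a)

/-- `φ` is valid w.r.t. neighborhood models: true (denotation = W) in every
neighborhood model over every nonempty set of worlds. -/
def NMValid (φ : Formula) : Prop :=
  ∀ (W : Type), Nonempty W → ∀ (Sn Sc : Set W → Set W) (d : ℕ → Set W),
    nden Sn Sc d φ = Set.univ

/-- Local consequence w.r.t. neighborhood models: `Γ ⊨_NM φ` iff `⊨_NM φ`, or there is
a finite nonempty subset `{γ, γ₁,…,γₙ} ⊆ Γ` with `⊨_NM (γ ∧ γ₁ ∧ … ∧ γₙ) → φ`. -/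
def NMConseq (Γ : Set Formula) (φ : Formula) : Prop :=
  NMValid φ ∨ ∃ (γ : Formula) (l : List Formula), γ ∈ Γ ∧ (∀ ψ ∈ l, ψ ∈ Γ) ∧
    NMValid (Formula.imp (Formula.conjL γ l) φ)

/-! ### Auxiliary development: canonical (Lindenbaum) model construction -/

/-- Derivation from a set of hypotheses: theorems of RmbC, hypotheses, and modus ponens.
(The global rules (R¬), (R∘) are only applied to theorems, inside `Prf ∅`.) -/
inductive DedFrom (Γ : Set Formula) : Formula → Prop
  | prf {φ} : Prf ∅ φ → DedFrom Γ φ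
  | hyp {φ} : φ ∈ Γ → DedFrom Γ φ
  | mp {a b} : DedFrom Γ (imp a b) → DedFrom Γ a → DedFrom Γ b

theorem prf_id (Ax : Set Formula) (a : Formula) : Prf Ax (imp a a) :=
  Prf.mp (Prf.mp (Prf.ax2 a (imp a a) a) (Prf.ax1 a (imp a a))) (Prf.ax1 a a)

theorem DedFrom.mono {Γ Δ : Set Formula} (h : Γ ⊆ Δ) {φ} (d : DedFrom Γ φ) :
    DedFrom Δ φ := by
  induction d with
  | prf h => exact .prf h
  | hyp hm => exact .hyp (h hm)
  | mp _ _ ih1 ih2 => exact .mp ih1 ih2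

/-- Deduction theorem. -/
theorem DedFrom.ded {Γ : Set Formula} {a b : Formula}
    (h : DedFrom (insert a Γ) b) : DedFrom Γ (imp a b) := by
  induction h with
  | prf h => exact .mp (.prf (Prf.ax1 _ a)) (.prf h)
  | @hyp φ hm =>
      rcases hm with h | h
      · subst h; exact .prf (prf_id ∅ _)
      · exact .mp (.prf (Prf.ax1 φ a)) (.hyp h)
  | @mp x y _ _ ih1 ih2 => exact .mp (.mp (.prf (Prf.ax2 a x y)) ih1) ih2

theorem DedFrom.toPrf {φ : Formula} (h : DedFrom ∅ φ) : Prf ∅ φ := by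
  induction h with
  | prf h => exact h
  | hyp hm => exact absurd hm (Set.notMem_empty _)
  | mp _ _ ih1 ih2 => exact ih1.mp ih2

/-- Compactness of `DedFrom`. -/
theorem DedFrom.compact {Γ : Set Formula} {φ : Formula} (h : DedFrom Γ φ) :
    ∃ s : Set Formula, s ⊆ Γ ∧ s.Finite ∧ DedFrom s φ := by
  induction h with
  | prf h => exact ⟨∅, by simp, Set.finite_empty, .prf h⟩
  | @hyp ψ hm => exact ⟨{ψ}, by simpa, Set.finite_singleton _, .hyp rfl⟩
  | mp _ _ ih1 ih2 =>
      obtain ⟨s1, hs1, hf1, hd1⟩ := ih1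
      obtain ⟨s2, hs2, hf2, hd2⟩ := ih2
      exact ⟨s1 ∪ s2, Set.union_subset hs1 hs2, hf1.union hf2,
        .mp (hd1.mono Set.subset_union_left) (hd2.mono Set.subset_union_right)⟩

theorem finite_subset_chain {c : Set (Set Formula)} (hc : IsChain (· ⊆ ·) c)
    (hne : c.Nonempty) {s : Set Formula} (hf : s.Finite) (hs : s ⊆ ⋃₀ c) :
    ∃ t ∈ c, s ⊆ t := by
  revert hs
  refine Set.Finite.induction_on (motive := fun s _ => s ⊆ ⋃₀ c → ∃ t ∈ c, s ⊆ t) s hf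
    (fun _ => ⟨hne.choose, hne.choose_spec, by simp⟩) ?_
  · intro x s hxs hsf ih hs
    obtain ⟨t1, ht1, hst1⟩ := ih (fun y hy => hs (Set.mem_insert_of_mem _ hy))
    obtain ⟨t2, ht2, hxt2⟩ := hs (Set.mem_insert x s)
    rcases eq_or_ne t1 t2 with rfl | hne'
    · exact ⟨t1, ht1, Set.insert_subset hxt2 hst1⟩
    rcases hc ht1 ht2 hne' with h | h
    · exact ⟨t2, ht2, Set.insert_subset hxt2 (hst1.trans h)⟩
    · exact ⟨t1, ht1, Set.insert_subset (h hxt2) hst1⟩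

/-- A theory which is relatively maximal: closed, not deriving its witness `w`,
and any proper extension derives `w`. -/
structure MaxT : Type where
  s : Set Formula
  w : Formula
  closed : ∀ φ, DedFrom s φ → φ ∈ s
  hw : ¬ DedFrom s w
  max : ∀ φ, φ ∉ s → DedFrom (insert φ s) w

/-- Lindenbaum lemma. -/
theorem lindenbaum {Γ : Set Formula} {α : Formula} (h : ¬ DedFrom Γ α) :
    ∃ T : MaxT, Γ ⊆ T.s ∧ T.w = α := by
  set S : Set (Set Formula) := {X | Γ ⊆ X ∧ ¬ DedFrom X α} with hS
  have hub : ∀ c ⊆ S, IsChain (· ⊆ ·) c → c.Nonempty → ∃ ub ∈ S, ∀ s ∈ c, s ⊆ ub := by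
    intro c hcS hchain hcne
    refine ⟨⋃₀ c, ⟨?_, ?_⟩, fun s hs => Set.subset_sUnion_of_mem hs⟩
    · obtain ⟨t, ht⟩ := hcne
      exact ((hcS ht).1).trans (Set.subset_sUnion_of_mem ht)
    · intro hd
      obtain ⟨s, hsub, hfin, hds⟩ := hd.compact
      obtain ⟨t, htc, hst⟩ := finite_subset_chain hchain hcne hfin hsub
      exact (hcS htc).2 (hds.mono hst)
  obtain ⟨m, hGm, hmS, hmax⟩ := zorn_subset_nonempty S hub Γ ⟨Set.Subset.rfl, h⟩
  · have hmem : Γ ⊆ m ∧ ¬ DedFrom m α := hmS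
    have hmax' : ∀ φ, φ ∉ m → DedFrom (insert φ m) α := by
      intro φ hφ
      by_contra hd
      have : insert φ m ∈ S := ⟨hGm.trans (Set.subset_insert _ _), hd⟩
      exact hφ (hmax this (Set.subset_insert _ _) (Set.mem_insert _ _))
    have hclosed : ∀ φ, DedFrom m φ → φ ∈ m := by
      intro φ hφ
      by_contra hφn
      exact hmem.2 (.mp (hmax' φ hφn).ded hφ)
    exact ⟨⟨m, α, hclosed, hmem.2, hmax'⟩, hGm, rfl⟩

namespace MaxT

theorem notw (T : MaxT) : T.w ∉ T.s := fun h => T.hw (.hyp h)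

theorem mem_of_prf (T : MaxT) {φ} (h : Prf ∅ φ) : φ ∈ T.s := T.closed _ (.prf h)

theorem mem_or {T : MaxT} {a b : Formula} : or a b ∈ T.s ↔ a ∈ T.s ∨ b ∈ T.s := by
  constructor
  · intro hm
    by_contra hc
    push_neg at hc
    have d1 : DedFrom T.s (imp a T.w) := (T.max a hc.1).ded
    have d2 : DedFrom T.s (imp b T.w) := (T.max b hc.2).ded
    exact T.hw (.mp (.mp (.mp (.prf (Prf.ax8 a b T.w)) d1) d2) (.hyp hm))
  · rintro (h | h)
    · exact T.closed _ (.mp (.prf (Prf.ax6 a b)) (.hyp h))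
    · exact T.closed _ (.mp (.prf (Prf.ax7 a b)) (.hyp h))

theorem mem_and {T : MaxT} {a b : Formula} : and a b ∈ T.s ↔ a ∈ T.s ∧ b ∈ T.s := by
  constructor
  · intro hm
    exact ⟨T.closed _ (.mp (.prf (Prf.ax4 a b)) (.hyp hm)),
      T.closed _ (.mp (.prf (Prf.ax5 a b)) (.hyp hm))⟩
  · rintro ⟨h1, h2⟩
    exact T.closed _ (.mp (.mp (.prf (Prf.ax3 a b)) (.hyp h1)) (.hyp h2))

theorem mem_imp {T : MaxT} {a b : Formula} : imp a b ∈ T.s ↔ (a ∈ T.s → b ∈ T.s) := by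
  constructor
  · intro hm ha
    exact T.closed _ (.mp (.hyp hm) (.hyp ha))
  · intro h
    by_cases ha : a ∈ T.s
    · exact T.closed _ (.mp (.prf (Prf.ax1 b a)) (.hyp (h ha)))
    · rcases mem_or.1 (T.mem_of_prf (Prf.ax9 a b)) with h' | h'
      · exact h'
      · exact absurd h' ha

theorem mem_neg_of_not {T : MaxT} {a : Formula} (h : a ∉ T.s) : neg a ∈ T.s := by
  rcases mem_or.1 (T.mem_of_prf (Prf.ax10 a)) with h' | h'
  · exact absurd h' h
  · exact h'

end MaxT

/-- The canonical set of worlds containing a formula. -/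
def tset (a : Formula) : Set MaxT := {T | a ∈ T.s}

/-- Separation: if every maximal theory containing `a` contains `b`, then `⊢ a → b`. -/
theorem sep {a b : Formula} (h : ∀ T : MaxT, a ∈ T.s → b ∈ T.s) : Prf ∅ (imp a b) := by
  by_contra hp
  have hd : ¬ DedFrom (insert a (∅ : Set Formula)) b := fun hd => hp (DedFrom.toPrf hd.ded)
  obtain ⟨T, hsub, hw⟩ := lindenbaum hd
  have ha : a ∈ T.s := hsub (Set.mem_insert _ _)
  exact absurd (h T ha) (hw ▸ T.notw)

theorem sep_iff {a b : Formula} (h : tset a = tset b) : Prf ∅ (iffF a b) := by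
  have h1 : Prf ∅ (imp a b) := sep fun T hT => by
    have : T ∈ tset a := hT
    rw [h] at this; exact this
  have h2 : Prf ∅ (imp b a) := sep fun T hT => by
    have : T ∈ tset b := hT
    rw [← h] at this; exact this
  exact (Prf.mp (Prf.ax3 _ _) h1).mp h2

/-- Canonical neighborhood functions. -/
def cSn (X : Set MaxT) : Set MaxT := {T | ∃ b : Formula, tset b = X ∧ neg b ∈ T.s}
def cSc (X : Set MaxT) : Set MaxT := {T | ∃ b : Formula, tset b = X ∧ circ b ∈ T.s}

theorem neg_tset (a : Formula) : (tset a)ᶜ ∪ cSn (tset a) = tset (neg a) := by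
  ext T
  constructor
  · rintro (h | ⟨b, hb, hnb⟩)
    · exact MaxT.mem_neg_of_not h
    · have := Prf.rneg (sep_iff hb)
      exact T.closed _ (.mp (.prf (Prf.mp (Prf.ax4 _ _) this)) (.hyp hnb))
  · intro h
    exact Or.inr ⟨a, rfl, h⟩

/-- Truth lemma for the canonical model. -/
theorem truth_lemma (a : Formula) :
    nden cSn cSc (fun n => tset (var n)) a = tset a := by
  induction a with
  | var n => rfl
  | and a b iha ihb =>
      rw [nden, iha, ihb]; ext T
      exact (MaxT.mem_and (a := a) (b := b)).symm
  | or a b iha ihb =>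
      rw [nden, iha, ihb]; ext T
      exact (MaxT.mem_or (a := a) (b := b)).symm
  | imp a b iha ihb =>
      rw [nden, iha, ihb]; ext T
      constructor
      · rintro (h | h)
        · exact MaxT.mem_imp.2 fun ha => absurd ha h
        · exact MaxT.mem_imp.2 fun _ => h
      · intro h
        by_cases ha : a ∈ T.s
        · exact Or.inr (MaxT.mem_imp.1 h ha)
        · exact Or.inl ha
  | neg a iha =>
      rw [nden, iha]; exact neg_tset a
  | circ a iha =>
      rw [nden, iha, neg_tset]; ext T
      constructor
      · rintro ⟨_, b, hb, hcb⟩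
        have := Prf.rcirc (sep_iff hb)
        exact T.closed _ (.mp (.prf (Prf.mp (Prf.ax4 _ _) this)) (.hyp hcb))
      · intro h
        refine ⟨?_, a, rfl, h⟩
        rintro ⟨ha, hna⟩
        exact T.hw (.mp (.mp (.mp (.prf (Prf.bc1 a T.w)) (.hyp h)) (.hyp ha)) (.hyp hna))

/-- The key completeness lemma: validity implies theoremhood. -/
theorem nmvalid_prf {φ : Formula} (h : NMValid φ) : Prf ∅ φ := by
  by_contra hp
  have hd : ¬ DedFrom ∅ φ := fun hd => hp hd.toPrf
  obtain ⟨T, -, hw⟩ := lindenbaum hd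
  have hval := h MaxT ⟨T⟩ cSn cSc (fun n => tset (var n))
  rw [truth_lemma] at hval
  have : φ ∈ T.s := by
    have : T ∈ tset φ := hval ▸ Set.mem_univ T
    exact this
  exact T.hw (hw ▸ DedFrom.hyp this)

/-- Theorem 5.8, Completeness of RmbC w.r.t. neighborhood models:
if `Γ ⊨_NM φ` then `Γ ⊢_RmbC φ`. -/
theorem rmbc_nbhd_completeness (Γ : Set Formula) (φ : Formula)
    (h : NMConseq Γ φ) : Deriv ∅ Γ φ := by
  rcases h with h | ⟨γ, l, hγ, hl, hv⟩
  · exact Or.inl (nmvalid_prf h)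
  · exact Or.inr ⟨γ, l, hγ, hl, nmvalid_prf hv⟩

end LFI
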